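/- Assume ∇U Lipschitz with constant L, ∇U(0)=0, and ⟨∇U(x),x⟩ ≥ (m/2)‖x‖² for ‖x‖ ≥ K₂ (with 0 < m ≤ L). For γ ∈ (0, m/(4L²)] and all x ∈ ℝ^d, the ULA kernel satisfies ∫ ‖y‖² Q_γ(x, dy) ≤ (1 - mγ/2)‖x‖² + b̃ γ 1_{‖x‖ ≤ K₄}, where K₄ = max(K₂, 2√(2d/m)) and b̃ = 2d + K₄²(γ̄L² + 2L + m/2) with γ̄ = m/(4L²). -/

import Mathlib

open MeasureTheory Real
open scoped BigOperators RealInnerProductSpace NNReal ENNReal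

noncomputable section

abbrev Euc (d : ℕ) := EuclideanSpace ℝ (Fin d)

/-- Laplacian via the second iterated Fréchet derivative in coordinate directions. -/
def lapl {d : ℕ} (φ : Euc d → ℝ) (x : Euc d) : ℝ :=
  ∑ i : Fin d, iteratedFDeriv ℝ 2 φ x ![EuclideanSpace.single i 1, EuclideanSpace.single i 1]

/-- The Langevin generator `L φ = -⟨∇U, ∇φ⟩ + Δφ`. -/
def gen {d : ℕ} (U φ : Euc d → ℝ) (x : Euc d) : ℝ :=
  - ⟪gradient U x, gradient φ x⟫ + lapl φ x

/-- The Gibbs probability measure `π(dx) ∝ e^{-U(x)} dx`. -/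
def gibbs {d : ℕ} (U : Euc d → ℝ) : Measure (Euc d) :=
  ((∫⁻ x, ENNReal.ofReal (Real.exp (-U x)))⁻¹) •
    ((volume : Measure (Euc d)).withDensity fun x => ENNReal.ofReal (Real.exp (-U x)))

/-- Polynomial growth of the `k`-th derivative. -/
def PolyGrowthD {d : ℕ} (k : ℕ) (f : Euc d → ℝ) : Prop :=
  ∃ (C : ℝ) (p : ℕ), ∀ x, ‖iteratedFDeriv ℝ k f x‖ ≤ C * (1 + ‖x‖) ^ p

/-- The standard Gaussian measure on `ℝ^d`. -/
def stdGaussian (d : ℕ) : Measure (Euc d) :=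
  (volume : Measure (Euc d)).withDensity
    fun z => ENNReal.ofReal ((2 * Real.pi) ^ (-(d:ℝ)/2) * Real.exp (-‖z‖ ^ 2 / 2))


noncomputable def g1 (t : ℝ) : ℝ := (2*π) ^ (-(1:ℝ)/2) * exp (-t^2/2)

lemma g1_nonneg (t : ℝ) : 0 ≤ g1 t := by
  unfold g1; positivity

lemma g1_fun_eq : g1 = fun t => (2*π) ^ (-(1:ℝ)/2) * exp (-(1/2) * t^2) := by
  funext t; unfold g1; ring_nf

lemma integrable_g1 : Integrable g1 := by
  rw [g1_fun_eq]
  exact (integrable_exp_neg_mul_sq (by norm_num : (0:ℝ) < 1/2)).const_mul _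

lemma integral_g1 : ∫ t, g1 t = 1 := by
  rw [g1_fun_eq]
  rw [integral_const_mul, integral_gaussian]
  rw [show π / (1/2) = 2 * π by ring, Real.sqrt_eq_rpow,
    ← Real.rpow_add (by positivity)]
  norm_num

lemma integrable_id_g1 : Integrable (fun t => t * g1 t) := by
  rw [g1_fun_eq]
  have := (integrable_mul_exp_neg_mul_sq (by norm_num : (0:ℝ) < 1/2)).const_mul
    ((2*π) ^ (-(1:ℝ)/2))
  convert this using 2 with t; ring

lemma integral_id_g1 : ∫ t, t * g1 t = 0 := by
  have h := integral_neg_eq_self (fun t => t * g1 t) (volume : Measure ℝ)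
  have heq : ∀ t : ℝ, (-t) * g1 (-t) = -(t * g1 t) := by
    intro t; unfold g1; ring_nf
  simp_rw [heq] at h
  rw [integral_neg] at h
  linarith [h]

lemma integrable_sq_g1 : Integrable (fun t => t^2 * g1 t) := by
  rw [g1_fun_eq]
  have := (integrable_rpow_mul_exp_neg_mul_sq (by norm_num : (0:ℝ) < 1/2)
    (by norm_num : (-1:ℝ) < 2)).const_mul ((2*π) ^ (-(1:ℝ)/2))
  convert this using 2 with t
  rw [show ((2:ℝ) : ℝ) = ((2:ℕ) : ℝ) by norm_num, Real.rpow_natCast]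
  ring

lemma integral_sq_exp_Ioi : ∫ t in Set.Ioi (0:ℝ), t^2 * exp (-(1/2) * t^2)
    = 2 ^ ((3:ℝ)/2) * (1/2) * Real.sqrt π / 2 := by
  have h := integral_rpow_mul_exp_neg_mul_rpow (p := 2) (q := 2) (b := 1/2)
    (by norm_num) (by norm_num) (by norm_num)
  have heq : ∀ t ∈ Set.Ioi (0:ℝ), t ^ (2:ℝ) * exp (-(1/2) * t ^ (2:ℝ))
      = t^2 * exp (-(1/2) * t^2) := by
    intro t ht
    rw [show ((2:ℝ) : ℝ) = ((2:ℕ) : ℝ) by norm_num, Real.rpow_natCast]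
  rw [setIntegral_congr_fun measurableSet_Ioi heq] at h
  rw [h]
  have hG : Real.Gamma ((2 + 1) / 2) = Real.sqrt π / 2 := by
    rw [show ((2:ℝ) + 1)/2 = 1/2 + 1 by norm_num, Real.Gamma_add_one (by norm_num),
      Real.Gamma_one_half_eq]
    ring
  rw [hG]
  have h2 : ((1:ℝ)/2) ^ (-(2+1)/2 : ℝ) = 2 ^ ((3:ℝ)/2) := by
    rw [show ((1:ℝ)/2) = 2⁻¹ by norm_num, Real.inv_rpow (by norm_num),
      ← Real.rpow_neg (by norm_num)]
    norm_num
  rw [h2]; ring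

lemma integrable_F : Integrable (fun t : ℝ => t^2 * exp (-(1/2) * t^2)) := by
  have := integrable_rpow_mul_exp_neg_mul_sq (by norm_num : (0:ℝ) < 1/2)
    (by norm_num : (-1:ℝ) < 2)
  convert this using 2 with t
  rw [show ((2:ℝ) : ℝ) = ((2:ℕ) : ℝ) by norm_num, Real.rpow_natCast]

lemma integral_F : ∫ t : ℝ, t^2 * exp (-(1/2) * t^2) = Real.sqrt 2 * Real.sqrt π := by
  have hsplit := intervalIntegral.integral_Iic_add_Ioi (b := (0:ℝ)) (μ := volume)
    integrable_F.integrableOn integrable_F.integrableOn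
  have hneg : ∫ t in Set.Iic (0:ℝ), t^2 * exp (-(1/2) * t^2)
      = ∫ t in Set.Ioi (0:ℝ), t^2 * exp (-(1/2) * t^2) := by
    have := integral_comp_neg_Ioi (c := (0:ℝ)) (f := fun t : ℝ => t^2 * exp (-(1/2) * t^2))
    simp only [neg_zero] at this
    rw [← this]
    congr 1; funext t; ring_nf
  rw [hneg, integral_sq_exp_Ioi] at hsplit
  rw [← hsplit]
  rw [show ((2:ℝ)) ^ ((3:ℝ)/2) = 2 * 2 ^ ((1:ℝ)/2) by
    rw [show ((3:ℝ)/2) = 1 + 1/2 by norm_num, Real.rpow_add (by norm_num), Real.rpow_one],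
    Real.sqrt_eq_rpow, Real.sqrt_eq_rpow]
  ring

lemma integral_sq_g1 : ∫ t, t^2 * g1 t = 1 := by
  rw [g1_fun_eq]
  have : ∀ t : ℝ, t^2 * ((2*π) ^ (-(1:ℝ)/2) * exp (-(1/2) * t^2))
      = (2*π) ^ (-(1:ℝ)/2) * (t^2 * exp (-(1/2) * t^2)) := fun t => by ring
  simp_rw [this]
  rw [integral_const_mul, integral_F]
  rw [show ((2*π : ℝ)) ^ (-(1:ℝ)/2) = ((2*π) ^ ((1:ℝ)/2))⁻¹ by
    rw [← Real.rpow_neg (by positivity)]; norm_num]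
  rw [← Real.sqrt_eq_rpow, Real.sqrt_mul (by norm_num)]
  have h2 : Real.sqrt 2 > 0 := Real.sqrt_pos.mpr (by norm_num)
  have hp : Real.sqrt π > 0 := Real.sqrt_pos.mpr Real.pi_pos
  field_simp


lemma euc_symm_apply {d : ℕ} (y : Fin d → ℝ) (i : Fin d) :
    (MeasurableEquiv.toLp 2 (Fin d → ℝ)) y i = y i := by
  simp [MeasurableEquiv.toLp_apply]

lemma euc_norm_sq {d : ℕ} (z : Euc d) : ‖z‖^2 = ∑ i, (z i)^2 := by
  rw [EuclideanSpace.norm_eq, Real.sq_sqrt (Finset.sum_nonneg fun i _ => by positivity)]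
  simp [sq_abs]

lemma density_prod (d : ℕ) (z : Euc d) :
    (2*π) ^ (-(d:ℝ)/2) * exp (-‖z‖^2/2) = ∏ i, g1 (z i) := by
  unfold g1
  rw [Finset.prod_mul_distrib, Finset.prod_const, ← Real.exp_sum]
  congr 1
  · rw [show (-(d:ℝ)/2) = (-(1:ℝ)/2) * d by ring,
      Real.rpow_mul (by positivity), Real.rpow_natCast]
    simp
  · rw [euc_norm_sq]
    rw [neg_div, Finset.sum_div, ← Finset.sum_neg_distrib]
    congr 1
    exact Finset.sum_congr rfl fun i _ => by ring

lemma integral_stdGaussian (d : ℕ) (f : Euc d → ℝ) :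
    ∫ z, f z ∂(stdGaussian d)
      = ∫ y : Fin d → ℝ, (∏ i, g1 (y i))
          * f ((MeasurableEquiv.toLp 2 (Fin d → ℝ)) y) := by
  rw [stdGaussian]
  have hm : Measurable (fun z : Euc d =>
      ((2*π) ^ (-(d:ℝ)/2) * exp (-‖z‖^2/2)).toNNReal) := by
    apply Measurable.real_toNNReal
    exact (continuous_const.mul ((continuous_norm.pow 2).neg.div_const 2).rexp).measurable
  rw [show (fun z : Euc d => ENNReal.ofReal ((2*π) ^ (-(d:ℝ)/2) * exp (-‖z‖^2/2)))
      = fun z => (((((2*π) ^ (-(d:ℝ)/2) * exp (-‖z‖^2/2)).toNNReal) : ℝ≥0) : ℝ≥0∞) from rfl]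
  rw [integral_withDensity_eq_integral_smul hm]
  rw [← ((EuclideanSpace.volume_preserving_symm_measurableEquiv_toLp (Fin d)).symm).integral_comp
    (MeasurableEquiv.measurableEmbedding _)]
  congr 1; funext y
  rw [NNReal.smul_def, smul_eq_mul,
    Real.coe_toNNReal _ (by positivity), density_prod]
  rfl


lemma prod_int : Integrable (fun y : Fin d → ℝ => ∏ i, g1 (y i)) :=
  Integrable.fintype_prod (𝕜 := ℝ) (fun _ => integrable_g1)

lemma prod_integral (d : ℕ) : ∫ y : Fin d → ℝ, ∏ i, g1 (y i) = 1 := by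
  rw [volume_pi, MeasureTheory.integral_fintype_prod_eq_pow (ι := Fin d) g1, integral_g1, one_pow]

lemma coord_prod_eq (d : ℕ) (j : Fin d) (y : Fin d → ℝ) :
    ∏ i, ((fun t => (if i = j then t else 1) * g1 t) (y i))
      = (∏ i, g1 (y i)) * y j := by
  rw [Finset.prod_mul_distrib]
  simp [Finset.prod_ite_eq', mul_comm]

lemma coord_int (d : ℕ) (j : Fin d) :
    Integrable (fun y : Fin d → ℝ => (∏ i, g1 (y i)) * y j) := by
  have h := Integrable.fintype_prod (𝕜 := ℝ) (μ := fun _ => volume)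
    (f := fun i => fun t => (if i = j then t else 1) * g1 t) (fun i => by
      by_cases h : i = j <;> simp [h, integrable_id_g1, integrable_g1])
  apply h.congr
  filter_upwards with y
  rw [coord_prod_eq]

lemma coord_integral (d : ℕ) (j : Fin d) :
    ∫ y : Fin d → ℝ, (∏ i, g1 (y i)) * y j = 0 := by
  have h := MeasureTheory.integral_fintype_prod_eq_prod (ι := Fin d) (μ := fun _ => volume)
    (f := fun i => fun t => (if i = j then t else 1) * g1 t)
  simp_rw [coord_prod_eq] at h
  rw [volume_pi, h, Finset.prod_eq_zero (Finset.mem_univ j)]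
  simp [integral_id_g1]

lemma sq_prod_eq (d : ℕ) (j : Fin d) (y : Fin d → ℝ) :
    ∏ i, ((fun t => (if i = j then t^2 else 1) * g1 t) (y i))
      = (∏ i, g1 (y i)) * (y j)^2 := by
  rw [Finset.prod_mul_distrib]
  simp [Finset.prod_ite_eq', mul_comm]

lemma sq_coord_int (d : ℕ) (j : Fin d) :
    Integrable (fun y : Fin d → ℝ => (∏ i, g1 (y i)) * (y j)^2) := by
  have h := Integrable.fintype_prod (𝕜 := ℝ) (μ := fun _ => volume)
    (f := fun i => fun t => (if i = j then t^2 else 1) * g1 t) (fun i => by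
      by_cases h : i = j <;> simp [h, integrable_sq_g1, integrable_g1])
  apply h.congr
  filter_upwards with y
  rw [sq_prod_eq]

lemma sq_coord_integral (d : ℕ) (j : Fin d) :
    ∫ y : Fin d → ℝ, (∏ i, g1 (y i)) * (y j)^2 = 1 := by
  have h := MeasureTheory.integral_fintype_prod_eq_prod (ι := Fin d) (μ := fun _ => volume)
    (f := fun i => fun t => (if i = j then t^2 else 1) * g1 t)
  simp_rw [sq_prod_eq] at h
  rw [volume_pi, h]
  apply Finset.prod_eq_one
  intro i _
  by_cases hij : i = j <;> simp [hij, integral_sq_g1, integral_g1]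

lemma stdGaussian_moment (d : ℕ) (a : Euc d) (c : ℝ) :
    ∫ z, ‖a + c • z‖^2 ∂(stdGaussian d) = ‖a‖^2 + c^2 * d := by
  rw [integral_stdGaussian]
  have hexp : ∀ y : Fin d → ℝ,
      ‖a + c • ((MeasurableEquiv.toLp 2 (Fin d → ℝ)) y)‖^2
        = ‖a‖^2 + 2*c*(∑ j, a j * y j) + c^2 * (∑ j, (y j)^2) := by
    intro y
    set w := (MeasurableEquiv.toLp 2 (Fin d → ℝ)) y with hw
    have hwi : ∀ i, w i = y i := fun i => euc_symm_apply y i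
    rw [norm_add_sq_real, real_inner_smul_right, norm_smul, mul_pow]
    have h1 : ⟪a, w⟫ = ∑ j, a j * y j := by
      rw [PiLp.inner_apply]
      exact Finset.sum_congr rfl fun j _ => by
        rw [RCLike.inner_apply, conj_trivial, hwi, mul_comm]
    have h2 : ‖w‖^2 = ∑ j, (y j)^2 := by
      rw [euc_norm_sq]
      exact Finset.sum_congr rfl fun j _ => by rw [hwi]
    rw [h1, h2]
    simp only [Real.norm_eq_abs, sq_abs]
    ring
  simp_rw [hexp, mul_add]
  have h1 : Integrable (fun y : Fin d → ℝ => (∏ i, g1 (y i)) * ‖a‖^2) :=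
    prod_int.mul_const _
  have e2 : (fun y : Fin d → ℝ => (∏ i, g1 (y i)) * (2*c*(∑ j, a j * y j)))
      = fun y => ∑ j, (2*c*a j) * ((∏ i, g1 (y i)) * y j) := by
    funext y
    rw [Finset.mul_sum, Finset.mul_sum]
    exact Finset.sum_congr rfl fun j _ => by ring
  have h2 : Integrable (fun y : Fin d → ℝ => (∏ i, g1 (y i)) * (2*c*(∑ j, a j * y j))) := by
    rw [e2]
    exact integrable_finset_sum _ fun j _ => (coord_int d j).const_mul _
  have e3 : (fun y : Fin d → ℝ => (∏ i, g1 (y i)) * (c^2 * (∑ j, (y j)^2)))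
      = fun y => ∑ j, c^2 * ((∏ i, g1 (y i)) * (y j)^2) := by
    funext y
    rw [Finset.mul_sum, Finset.mul_sum]
    exact Finset.sum_congr rfl fun j _ => by ring
  have h3 : Integrable (fun y : Fin d → ℝ => (∏ i, g1 (y i)) * (c^2 * (∑ j, (y j)^2))) := by
    rw [e3]
    exact integrable_finset_sum _ fun j _ => (sq_coord_int d j).const_mul _
  have key : ∫ y : Fin d → ℝ,
      ((∏ i, g1 (y i)) * ‖a‖^2 + (∏ i, g1 (y i)) * (2*c*(∑ j, a j * y j)))
        + (∏ i, g1 (y i)) * (c^2 * (∑ j, (y j)^2))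
      = ((∫ y : Fin d → ℝ, (∏ i, g1 (y i)) * ‖a‖^2)
          + ∫ y : Fin d → ℝ, (∏ i, g1 (y i)) * (2*c*(∑ j, a j * y j)))
        + ∫ y : Fin d → ℝ, (∏ i, g1 (y i)) * (c^2 * (∑ j, (y j)^2)) := by
    have h12 : Integrable (fun y : Fin d → ℝ =>
        (∏ i, g1 (y i)) * ‖a‖^2 + (∏ i, g1 (y i)) * (2*c*(∑ j, a j * y j))) := h1.add h2
    rw [integral_add h12 h3, integral_add h1 h2]
  rw [key]
  have v1 : ∫ y : Fin d → ℝ, (∏ i, g1 (y i)) * ‖a‖^2 = ‖a‖^2 := by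
    rw [integral_mul_const, prod_integral, one_mul]
  have v2 : ∫ y : Fin d → ℝ, (∏ i, g1 (y i)) * (2*c*(∑ j, a j * y j)) = 0 := by
    rw [e2, integral_finset_sum _ fun j _ => (coord_int d j).const_mul _]
    simp [integral_const_mul, coord_integral]
  have v3 : ∫ y : Fin d → ℝ, (∏ i, g1 (y i)) * (c^2 * (∑ j, (y j)^2)) = c^2 * d := by
    rw [e3, integral_finset_sum _ fun j _ => (sq_coord_int d j).const_mul _]
    simp [integral_const_mul, sq_coord_integral]
    ring
  rw [v1, v2, v3, add_zero]

set_option maxHeartbeats 1000000 in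
theorem stmt_9 {d : ℕ} (U : Euc d → ℝ) (L m K₂ : ℝ)
    (hLip : ∀ x y, ‖gradient U x - gradient U y‖ ≤ L * ‖x - y‖)
    (h0 : gradient U 0 = 0)
    (hm : 0 < m) (hmL : m ≤ L) (hK₂ : 0 ≤ K₂)
    (hdrift : ∀ x : Euc d, K₂ ≤ ‖x‖ → (m/2) * ‖x‖ ^ 2 ≤ ⟪gradient U x, x⟫)
    (γ : ℝ) (hγ : γ ∈ Set.Ioc 0 (m/(4*L^2))) (x : Euc d) :
    ∫ z, ‖x - γ • gradient U x + Real.sqrt (2*γ) • z‖ ^ 2 ∂(stdGaussian d)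
      ≤ (1 - m*γ/2) * ‖x‖ ^ 2
        + (2*(d:ℝ) + (max K₂ (2*Real.sqrt (2*(d:ℝ)/m))) ^ 2
            * ((m/(4*L^2))*L^2 + 2*L + m/2)) * γ
          * (if ‖x‖ ≤ max K₂ (2*Real.sqrt (2*(d:ℝ)/m)) then 1 else 0) := by
  obtain ⟨hγ0, hγ1⟩ := hγ
  have hL : 0 < L := lt_of_lt_of_le hm hmL
  set g := gradient U x with hgdef
  set K₄ := max K₂ (2*Real.sqrt (2*(d:ℝ)/m)) with hK4
  have hK4nn : 0 ≤ K₄ := le_trans hK₂ (le_max_left _ _)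
  have hgnorm : ‖g‖ ≤ L * ‖x‖ := by
    have := hLip x 0
    rwa [h0, sub_zero, sub_zero] at this
  have hmom := stdGaussian_moment d (x - γ • g) (Real.sqrt (2*γ))
  rw [hmom, Real.sq_sqrt (by linarith : (0:ℝ) ≤ 2*γ)]
  have hexp : ‖x - γ • g‖^2 = ‖x‖^2 - 2*γ*⟪g, x⟫ + γ^2*‖g‖^2 := by
    rw [norm_sub_sq_real, real_inner_smul_right, norm_smul, mul_pow, real_inner_comm]
    simp only [Real.norm_eq_abs, sq_abs]
    ring
  rw [hexp]
  have hgsq : ‖g‖^2 ≤ L^2 * ‖x‖^2 := by nlinarith [norm_nonneg g, norm_nonneg x]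
  have hγL : γ * L^2 ≤ m/4 := by
    have h := (le_div_iff₀ (by positivity : (0:ℝ) < 4*L^2)).mp hγ1
    nlinarith
  by_cases hx : ‖x‖ ≤ K₄
  · rw [if_pos hx, mul_one]
    have hinner : -(2:ℝ)*⟪g, x⟫ ≤ 2*L*‖x‖^2 := by
      have h1 : |⟪g, x⟫| ≤ ‖g‖ * ‖x‖ := abs_real_inner_le_norm g x
      nlinarith [neg_abs_le (⟪g, x⟫ : ℝ), norm_nonneg x]
    have hxsq : ‖x‖^2 ≤ K₄^2 := by nlinarith [norm_nonneg x]
    have t1 : γ * (-(2:ℝ)*⟪g, x⟫) ≤ γ * (2*L*‖x‖^2) :=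
      mul_le_mul_of_nonneg_left hinner hγ0.le
    have e1 : γ^2*‖g‖^2 ≤ γ^2*(L^2*‖x‖^2) := mul_le_mul_of_nonneg_left hgsq (sq_nonneg γ)
    have e2 : γ*L^2 ≤ (m/(4*L^2))*L^2 := mul_le_mul_of_nonneg_right hγ1 (sq_nonneg L)
    have e3 : (γ*L^2) * (γ*‖x‖^2) ≤ ((m/(4*L^2))*L^2) * (γ*‖x‖^2) :=
      mul_le_mul_of_nonneg_right e2 (by positivity)
    have t2 : γ^2*‖g‖^2 ≤ γ * ((m/(4*L^2))*L^2) * ‖x‖^2 := by nlinarith [e1, e3]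
    have hc : (0:ℝ) ≤ (m/(4*L^2))*L^2 + 2*L + m/2 := by positivity
    have t3 : γ * ‖x‖^2 * ((m/(4*L^2))*L^2 + 2*L + m/2)
        ≤ γ * K₄^2 * ((m/(4*L^2))*L^2 + 2*L + m/2) :=
      mul_le_mul_of_nonneg_right (mul_le_mul_of_nonneg_left hxsq hγ0.le) hc
    nlinarith [t1, t2, t3]
  · rw [if_neg hx, mul_zero, add_zero]
    push_neg at hx
    have hxK2 : K₂ ≤ ‖x‖ := le_trans (le_max_left _ _) hx.le
    have hdr := hdrift x hxK2
    have hxbig : 2*Real.sqrt (2*(d:ℝ)/m) ≤ ‖x‖ := le_trans (le_max_right _ _) hx.le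
    have hsq : Real.sqrt (2*(d:ℝ)/m) ^ 2 = 2*(d:ℝ)/m := Real.sq_sqrt (by positivity)
    have hd : 2*(d:ℝ) ≤ m/4 * ‖x‖^2 := by
      have h1 : (2*Real.sqrt (2*(d:ℝ)/m))^2 ≤ ‖x‖^2 := by
        nlinarith [Real.sqrt_nonneg (2*(d:ℝ)/m), norm_nonneg x]
      rw [mul_pow, hsq] at h1
      have h2 : (8*(d:ℝ))/m ≤ ‖x‖^2 := by
        rw [show (8*(d:ℝ))/m = 2^2*(2*(d:ℝ)/m) by ring]; exact h1
      have h3 := (div_le_iff₀ hm).mp h2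
      linarith
    have u1 : γ * (m/2*‖x‖^2) ≤ γ * ⟪g, x⟫ := mul_le_mul_of_nonneg_left hdr hγ0.le
    have e1 : γ^2*‖g‖^2 ≤ γ^2*(L^2*‖x‖^2) := mul_le_mul_of_nonneg_left hgsq (sq_nonneg γ)
    have e3 : (γ*L^2) * (γ*‖x‖^2) ≤ (m/4) * (γ*‖x‖^2) :=
      mul_le_mul_of_nonneg_right hγL (by positivity)
    have u2 : γ^2*‖g‖^2 ≤ γ * (m/4) * ‖x‖^2 := by nlinarith [e1, e3]
    have u3 : γ * (2*(d:ℝ)) ≤ γ * (m/4 * ‖x‖^2) := mul_le_mul_of_nonneg_left hd hγ0.le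
    nlinarith [u1, u2, u3]
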